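/- For every integer m ≥ 2 and every real x ∈ [m·e, (m+1)·e) with (x/m)^m ≥ (x/(m+1))^{m+1}, one has e^{x/e} − (x/(m+1))^{m+1} ≤ (1/m)·(x/(m+1))^{m+1}. -/

import Mathlib

theorem stmt9 (m : ℕ) (hm : 2 ≤ m) (x : ℝ)
    (h0 : (m : ℝ) * Real.exp 1 ≤ x) (h1 : x < ((m : ℝ) + 1) * Real.exp 1)
    (hcase : (x / ((m : ℝ) + 1)) ^ ((m : ℝ) + 1) ≤ (x / (m : ℝ)) ^ (m : ℝ)) :
    Real.exp (x / Real.exp 1) - (x / ((m : ℝ) + 1)) ^ ((m : ℝ) + 1)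
      ≤ (1 / (m : ℝ)) * (x / ((m : ℝ) + 1)) ^ ((m : ℝ) + 1) := by
  have e1 : (0:ℝ) < Real.exp 1 := Real.exp_pos 1
  have hm2 : (2:ℝ) ≤ (m:ℝ) := by exact_mod_cast hm
  have hm0 : (0:ℝ) < (m:ℝ) := by linarith
  have hm1 : (0:ℝ) < (m:ℝ) + 1 := by linarith
  have hx0 : (0:ℝ) < x := lt_of_lt_of_le (by positivity) h0
  set u : ℝ := x / (Real.exp 1 * ((m:ℝ)+1)) with hu
  have hu1 : u < 1 := by
    rw [hu, div_lt_one (by positivity)]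
    nlinarith
  have hu0 : (m:ℝ)/((m:ℝ)+1) ≤ u := by
    rw [hu, div_le_div_iff₀ hm1 (by positivity)]
    nlinarith
  have hup : (0:ℝ) < u := lt_of_lt_of_le (by positivity) hu0
  set L : ℝ := Real.log (((m:ℝ)+1)/(m:ℝ)) with hL
  have key1 : (m:ℝ) * L ≤ 1 := by
    have h := Real.log_le_sub_one_of_pos (show (0:ℝ) < ((m:ℝ)+1)/(m:ℝ) by positivity)
    have h2 : ((m:ℝ)+1)/(m:ℝ) - 1 = 1/(m:ℝ) := by field_simp; ring
    rw [h2] at h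
    rw [hL]
    calc (m:ℝ) * Real.log (((m:ℝ)+1)/(m:ℝ)) ≤ (m:ℝ) * (1/(m:ℝ)) := by
          exact mul_le_mul_of_nonneg_left h hm0.le
      _ = 1 := by field_simp
  have key2 : Real.log ((m:ℝ)/((m:ℝ)+1) / u) ≤ (m:ℝ)/((m:ℝ)+1)/u - 1 :=
    Real.log_le_sub_one_of_pos (by positivity)
  have hlogsplit : Real.log ((m:ℝ)/((m:ℝ)+1) / u) = -L - Real.log u := by
    rw [Real.log_div (by positivity : (0:ℝ) < (m:ℝ)/((m:ℝ)+1)).ne' hup.ne', hL,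
      Real.log_div hm0.ne' hm1.ne', Real.log_div hm1.ne' hm0.ne']
    ring
  -- From key2: log u ≥ u - m/(m+1) - L
  have hfrac : (m:ℝ)/((m:ℝ)+1)/u - 1 ≤ (m:ℝ)/((m:ℝ)+1) - u := by
    rw [div_sub_one hup.ne', div_le_iff₀ hup]
    have h1' : (m:ℝ)/((m:ℝ)+1) - u ≤ 0 := by linarith
    nlinarith
  have hlogu : u - (m:ℝ)/((m:ℝ)+1) - L ≤ Real.log u := by
    rw [hlogsplit] at key2
    linarith
  have main : x / Real.exp 1 ≤ L + ((m:ℝ)+1) * (Real.log u + 1) := by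
    have hxe : x / Real.exp 1 = ((m:ℝ)+1) * u := by
      rw [hu]; field_simp
    rw [hxe]
    have hm' : ((m:ℝ)+1) * ((m:ℝ)/((m:ℝ)+1)) = (m:ℝ) := by field_simp
    nlinarith [mul_le_mul_of_nonneg_left hlogu hm1.le]
  have hB : (x / ((m:ℝ)+1)) ^ ((m:ℝ)+1) = Real.exp (((m:ℝ)+1) * (Real.log u + 1)) := by
    have hbu : x / ((m:ℝ)+1) = u * Real.exp 1 := by rw [hu]; field_simp
    rw [hbu, Real.rpow_def_of_pos (by positivity), Real.log_mul hup.ne' e1.ne', Real.log_exp, mul_comm]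
  have hfin : Real.exp (x / Real.exp 1)
      ≤ (((m:ℝ)+1)/(m:ℝ)) * (x / ((m:ℝ)+1)) ^ ((m:ℝ)+1) := by
    calc Real.exp (x / Real.exp 1) ≤ Real.exp (L + ((m:ℝ)+1)*(Real.log u + 1)) :=
          Real.exp_le_exp.mpr main
      _ = (((m:ℝ)+1)/(m:ℝ)) * (x / ((m:ℝ)+1)) ^ ((m:ℝ)+1) := by
          rw [Real.exp_add, hB, hL, Real.exp_log (by positivity)]
  have hBpos : (0:ℝ) < (x / ((m:ℝ)+1)) ^ ((m:ℝ)+1) := Real.rpow_pos_of_pos (by positivity) _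
  have hsplit : (((m:ℝ)+1)/(m:ℝ)) * (x / ((m:ℝ)+1)) ^ ((m:ℝ)+1)
      = (x / ((m:ℝ)+1)) ^ ((m:ℝ)+1) + (1/(m:ℝ)) * (x / ((m:ℝ)+1)) ^ ((m:ℝ)+1) := by
    field_simp
  linarith
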